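/- Consider the POVM elements E₀ = (1/2)[π₀⊗(π₀+π₊) + π₁⊗(π₁+π₋)] and E₁ = I − E₀ on a two-qubit space, where π₀, π₁ are computational-basis projectors and π₊, π₋ are Hadamard-basis projectors. Then the operator norm of E₀ and of E₁ equals cos²(π/8), and hence for any state ρ, max(tr(E₀ρ), tr(E₁ρ)) ≤ cos²(π/8), i.e., the measurement outcome has min-entropy at least −log₂ cos²(π/8). -/

import Mathlib

open Matrix
open scoped Kronecker ComplexOrder

noncomputable def pi0 : Matrix (Fin 2) (Fin 2) ℂ := !![1, 0; 0, 0]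
noncomputable def pi1 : Matrix (Fin 2) (Fin 2) ℂ := !![0, 0; 0, 1]
noncomputable def piPlus : Matrix (Fin 2) (Fin 2) ℂ := !![1/2, 1/2; 1/2, 1/2]
noncomputable def piMinus : Matrix (Fin 2) (Fin 2) ℂ := !![1/2, -1/2; -1/2, 1/2]

noncomputable def E0 : Matrix (Fin 2 × Fin 2) (Fin 2 × Fin 2) ℂ :=
  (1/2 : ℂ) • (pi0 ⊗ₖ (pi0 + piPlus) + pi1 ⊗ₖ (pi1 + piMinus))

noncomputable def E1 : Matrix (Fin 2 × Fin 2) (Fin 2 × Fin 2) ℂ := 1 - E0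


lemma aux_norm_eq {n : Type*} [Fintype n] [DecidableEq n]
    (A B : Matrix n n ℂ) (c : ℝ) (hc : 0 ≤ c)
    (hfac : ((c : ℂ)^2) • (1 : Matrix n n ℂ) - Aᴴ * A = Bᴴ * B)
    (u : n → ℂ) (hu : u ≠ 0) (hAu : A *ᵥ u = (c : ℂ) • u) :
    ‖Matrix.toEuclideanCLM (𝕜 := ℂ) A‖ = c := by
  set T := Matrix.toEuclideanCLM (𝕜 := ℂ) A with hT
  set S := Matrix.toEuclideanCLM (𝕜 := ℂ) B with hS
  have key : ∀ x : EuclideanSpace ℂ n, ‖T x‖^2 + ‖S x‖^2 = c^2 * ‖x‖^2 := by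
    intro x
    have h1 : (inner ℂ (T x) (T x) : ℂ) + inner ℂ (S x) (S x)
        = (c:ℂ)^2 * inner ℂ x x := by
      have hA' : (inner ℂ (T x) (T x) : ℂ) = inner ℂ x ((Matrix.toEuclideanCLM (𝕜 := ℂ) (Aᴴ * A)) x) := by
        rw [_root_.map_mul, ← Matrix.star_eq_conjTranspose, map_star,
          ContinuousLinearMap.star_eq_adjoint]
        simp [ContinuousLinearMap.adjoint_inner_right, hT]
      have hB' : (inner ℂ (S x) (S x) : ℂ) = inner ℂ x ((Matrix.toEuclideanCLM (𝕜 := ℂ) (Bᴴ * B)) x) := by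
        rw [_root_.map_mul, ← Matrix.star_eq_conjTranspose, map_star,
          ContinuousLinearMap.star_eq_adjoint]
        simp [ContinuousLinearMap.adjoint_inner_right, hS]
      rw [hA', hB', ← hfac, map_sub, _root_.map_smul, _root_.map_one]
      rw [ContinuousLinearMap.sub_apply, inner_sub_right, ContinuousLinearMap.smul_apply,
        ContinuousLinearMap.one_apply, inner_smul_right]
      ring
    have := congrArg Complex.re h1
    simpa [inner_self_eq_norm_sq_to_K, ← Complex.ofReal_pow] using this
  have upper : ‖T‖ ≤ c := by
    refine ContinuousLinearMap.opNorm_le_bound _ hc (fun x => ?_)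
    have h2 : ‖T x‖^2 ≤ (c * ‖x‖)^2 := by
      have := key x
      nlinarith [sq_nonneg ‖S x‖]
    exact (pow_le_pow_iff_left₀ (norm_nonneg _) (by positivity) (by norm_num)).mp h2
  have lower : c ≤ ‖T‖ := by
    have hux : ((WithLp.equiv 2 (n → ℂ)).symm u : EuclideanSpace ℂ n) ≠ 0 := by
      simpa using hu
    have hTu : T ((WithLp.equiv 2 (n → ℂ)).symm u) = (c:ℂ) • (WithLp.equiv 2 (n → ℂ)).symm u := by
      rw [hT, WithLp.equiv_symm_apply, Matrix.toEuclideanCLM_toLp]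
      simp [Matrix.toLin'_apply, hAu]
    have := ContinuousLinearMap.ratio_le_opNorm T ((WithLp.equiv 2 (n → ℂ)).symm u)
    rwa [hTu, norm_smul, Complex.norm_real, Real.norm_eq_abs, abs_of_nonneg hc,
      mul_div_assoc, div_self (norm_ne_zero_iff.mpr hux), mul_one] at this
  exact le_antisymm upper lower


lemma aux_quad {n : Type*} [Fintype n] [DecidableEq n]
    (E : Matrix n n ℂ) (c : ℝ) (hE : ‖Matrix.toEuclideanCLM (𝕜 := ℂ) E‖ = c)
    (x : n → ℂ) : (star x ⬝ᵥ (E *ᵥ x)).re ≤ c * (star x ⬝ᵥ x).re := by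
  set T := Matrix.toEuclideanCLM (𝕜 := ℂ) E with hT
  set X : EuclideanSpace ℂ n := (WithLp.equiv 2 (n → ℂ)).symm x with hX
  have h1 : (inner ℂ X (T X) : ℂ) = star x ⬝ᵥ (E *ᵥ x) := by
    rw [hX, hT, WithLp.equiv_symm_apply, Matrix.toEuclideanCLM_toLp,
      EuclideanSpace.inner_toLp_toLp, dotProduct_comm]
  have h2 : (inner ℂ X X : ℂ) = star x ⬝ᵥ x :=
    (EuclideanSpace.inner_toLp_toLp x x).trans (dotProduct_comm _ _)
  have h3 : (star x ⬝ᵥ (E *ᵥ x)).re ≤ ‖X‖ * ‖T X‖ := by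
    rw [← h1]
    have := norm_inner_le_norm (𝕜 := ℂ) X (T X)
    exact le_trans (Complex.re_le_norm _) (by exact this)
  have h4 : ‖T X‖ ≤ c * ‖X‖ := by
    rw [← hE]; exact T.le_opNorm X
  have h5 : (star x ⬝ᵥ x).re = ‖X‖^2 := by
    rw [← h2, inner_self_eq_norm_sq_to_K]
    simp [← Complex.ofReal_pow]
  have hc : 0 ≤ c := hE ▸ norm_nonneg T
  nlinarith [norm_nonneg X, norm_nonneg (T X)]

open scoped MatrixOrder in
lemma aux_trace_le {n : Type*} [Fintype n] [DecidableEq n]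
    (E : Matrix n n ℂ) (c : ℝ) (hE : ‖Matrix.toEuclideanCLM (𝕜 := ℂ) E‖ = c)
    (ρ : Matrix n n ℂ) (hρ : ρ.PosSemidef) (htr : ρ.trace = 1) :
    ((E * ρ).trace).re ≤ c := by
  set S := CFC.sqrt ρ with hSdef
  have hS2 : S * S = ρ := CFC.sqrt_mul_sqrt_self ρ (nonneg_iff_posSemidef.mpr hρ)
  have hSH : S.IsHermitian := (CFC.sqrt_nonneg ρ).isSelfAdjoint
  have hstar : ∀ k l, star (S k l) = S l k := by
    intro k l
    conv_rhs => rw [← hSH]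
    simp [Matrix.conjTranspose_apply]
  have hcycle : (E * ρ).trace = (S * E * S).trace := by
    rw [← hS2, ← Matrix.mul_assoc, Matrix.trace_mul_comm, ← Matrix.mul_assoc]
  have hdiag : ∀ j, (S * E * S) j j
      = star (fun k => S k j) ⬝ᵥ (E *ᵥ (fun k => S k j)) := by
    intro j
    simp only [Matrix.mul_apply, dotProduct, Matrix.mulVec, Pi.star_apply, hstar,
      Finset.sum_mul, Finset.mul_sum]
    rw [Finset.sum_comm]
    exact Finset.sum_congr rfl fun l _ => Finset.sum_congr rfl fun k _ => by ring
  have hcol : ∀ j, (star (fun k => S k j) ⬝ᵥ (fun k => S k j)) = ρ j j := by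
    intro j
    rw [← hS2]
    simp only [Matrix.mul_apply, dotProduct, Pi.star_apply, hstar]
  rw [hcycle, Matrix.trace, Complex.re_sum]
  calc ∑ j, ((S * E * S).diag j).re
      ≤ ∑ j, c * ((star (fun k => S k j) ⬝ᵥ (fun k => S k j)).re) := by
        refine Finset.sum_le_sum fun j _ => ?_
        rw [Matrix.diag_apply, hdiag j]
        exact aux_quad E c hE _
    _ = c * (ρ.trace).re := by
        rw [← Finset.mul_sum]
        congr 1
        rw [Matrix.trace, Complex.re_sum]
        exact Finset.sum_congr rfl fun j _ => by rw [hcol j]; rfl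
    _ = c := by rw [htr]; simp


noncomputable def aR : ℝ := Real.sqrt (Real.sqrt 2 - 1)
noncomputable def bR : ℝ := Real.sqrt (Real.sqrt 2 + 1)
noncomputable def cR : ℝ := (2 + Real.sqrt 2) / 4

noncomputable def B0 : Matrix (Fin 2 × Fin 2) (Fin 2 × Fin 2) ℂ :=
  pi0 ⊗ₖ !![((aR/2 : ℝ) : ℂ), -((bR/2 : ℝ) : ℂ); 0, 0] +
  pi1 ⊗ₖ !![((bR/2 : ℝ) : ℂ), ((aR/2 : ℝ) : ℂ); 0, 0]

noncomputable def B1 : Matrix (Fin 2 × Fin 2) (Fin 2 × Fin 2) ℂ :=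
  pi0 ⊗ₖ !![((bR/2 : ℝ) : ℂ), ((aR/2 : ℝ) : ℂ); 0, 0] +
  pi1 ⊗ₖ !![((aR/2 : ℝ) : ℂ), -((bR/2 : ℝ) : ℂ); 0, 0]

lemma sqrt2_ge_one : (1:ℝ) ≤ Real.sqrt 2 := by
  rw [show (1:ℝ) = Real.sqrt 1 by simp]
  exact Real.sqrt_le_sqrt (by norm_num)

lemma haC : ((aR : ℝ) : ℂ)^2 = (Real.sqrt 2 : ℂ) - 1 := by
  have h : aR^2 = Real.sqrt 2 - 1 := Real.sq_sqrt (by linarith [sqrt2_ge_one])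
  rw [← Complex.ofReal_pow, h]; push_cast; ring

lemma hbC : ((bR : ℝ) : ℂ)^2 = (Real.sqrt 2 : ℂ) + 1 := by
  have h : bR^2 = Real.sqrt 2 + 1 := Real.sq_sqrt (by linarith [sqrt2_ge_one])
  rw [← Complex.ofReal_pow, h]; push_cast; ring

lemma habC : ((aR : ℝ) : ℂ) * ((bR : ℝ) : ℂ) = 1 := by
  have h : aR * bR = 1 := by
    rw [aR, bR, ← Real.sqrt_mul (by linarith [sqrt2_ge_one])]
    have h2 : (Real.sqrt 2 - 1) * (Real.sqrt 2 + 1) = 1 := by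
      have := Real.sq_sqrt (by norm_num : (0:ℝ) ≤ 2)
      nlinarith
    rw [h2, Real.sqrt_one]
  rw [← Complex.ofReal_mul, h, Complex.ofReal_one]

lemma hsC : ((Real.sqrt 2 : ℝ) : ℂ)^2 = 2 := by
  rw [← Complex.ofReal_pow, Real.sq_sqrt (by norm_num : (0:ℝ) ≤ 2)]
  norm_num

set_option maxHeartbeats 2000000 in
lemma hfac0 : ((cR : ℂ)^2) • (1 : Matrix (Fin 2 × Fin 2) (Fin 2 × Fin 2) ℂ) - E0ᴴ * E0
    = B0ᴴ * B0 := by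
  have hs := hsC; have ha := haC; have hb := hbC; have hab := habC
  ext ⟨i, j⟩ ⟨k, l⟩
  fin_cases i <;> fin_cases j <;> fin_cases k <;> fin_cases l <;>
    · simp [-Prod.mk_zero_zero, -Prod.mk_one_one, Prod.ext_iff, Matrix.mul_apply, Fintype.sum_prod_type,
        Fin.sum_univ_two, E0, B0, pi0, pi1, piPlus, piMinus, Matrix.conjTranspose_apply,
        Matrix.one_apply, cR, Prod.mk.injEq, map_div₀, _root_.map_one, _root_.map_neg, _root_.map_ofNat,
        Complex.conj_ofReal] <;>
    (push_cast;
     first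
     | ring1
     | linear_combination hs/16 - ha/4
     | linear_combination hs/16 + ha/4
     | linear_combination hs/16 - hb/4
     | linear_combination hs/16 + hb/4
     | linear_combination hab/4
     | linear_combination -hab/4
     | linear_combination hs/16 + hb/4 - hab/4
     | linear_combination hs/16 - hb/4 + hab/4
     | linear_combination hs/16 + ha/4 - hab/4
     | linear_combination hs/16 - ha/4 + hab/4
     | linear_combination hs/16 + ha/4 + hab/4
     | linear_combination hs/16 + hb/4 + hab/4
     | linear_combination hs/16 - ha/4 - hab/4
     | linear_combination hs/16 - hb/4 - hab/4)

set_option maxHeartbeats 2000000 in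
lemma hfac1 : ((cR : ℂ)^2) • (1 : Matrix (Fin 2 × Fin 2) (Fin 2 × Fin 2) ℂ) - E1ᴴ * E1
    = B1ᴴ * B1 := by
  have hs := hsC; have ha := haC; have hb := hbC; have hab := habC
  ext ⟨i, j⟩ ⟨k, l⟩
  fin_cases i <;> fin_cases j <;> fin_cases k <;> fin_cases l <;>
    · simp [-Prod.mk_zero_zero, -Prod.mk_one_one, Prod.ext_iff, Matrix.mul_apply, Fintype.sum_prod_type,
        Fin.sum_univ_two, E1, E0, B1, pi0, pi1, piPlus, piMinus, Matrix.conjTranspose_apply,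
        Matrix.one_apply, cR, Prod.mk.injEq, map_div₀, _root_.map_one, _root_.map_neg, _root_.map_ofNat,
        Complex.conj_ofReal, Matrix.sub_apply] <;>
    (push_cast;
     first
     | ring1
     | linear_combination hs/16 - ha/4
     | linear_combination hs/16 + ha/4
     | linear_combination hs/16 - hb/4
     | linear_combination hs/16 + hb/4
     | linear_combination hab/4
     | linear_combination -hab/4
     | linear_combination hs/16 + hb/4 - hab/4
     | linear_combination hs/16 - hb/4 + hab/4
     | linear_combination hs/16 + ha/4 - hab/4
     | linear_combination hs/16 - ha/4 + hab/4
     | linear_combination hs/16 + ha/4 + hab/4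
     | linear_combination hs/16 + hb/4 + hab/4
     | linear_combination hs/16 - ha/4 - hab/4
     | linear_combination hs/16 - hb/4 - hab/4)

noncomputable def u0 : Fin 2 × Fin 2 → ℂ := fun p =>
  if p = (0,0) then 1 else if p = (0,1) then (Real.sqrt 2 : ℂ) - 1 else 0

noncomputable def u1 : Fin 2 × Fin 2 → ℂ := fun p =>
  if p = (1,0) then 1 else if p = (1,1) then (Real.sqrt 2 : ℂ) - 1 else 0

lemma hu0ne : u0 ≠ 0 := by
  intro h
  have := congrFun h (0,0)
  simp [u0] at this

lemma hu1ne : u1 ≠ 0 := by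
  intro h
  have := congrFun h (1,0)
  simp [-Prod.mk_one_one, u1, Prod.ext_iff] at this

lemma hEu0 : E0 *ᵥ u0 = (cR : ℂ) • u0 := by
  have hs := hsC
  funext ⟨i, j⟩
  fin_cases i <;> fin_cases j <;>
    · simp [-Prod.mk_zero_zero, -Prod.mk_one_one, Prod.ext_iff, Matrix.mulVec,
        dotProduct, Fintype.sum_prod_type, Fin.sum_univ_two, E0, u0, pi0, pi1,
        piPlus, piMinus, cR] <;>
    (push_cast;
     first
     | ring1
     | linear_combination hs/4
     | linear_combination -hs/4)

lemma hEu1 : E1 *ᵥ u1 = (cR : ℂ) • u1 := by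
  have hs := hsC
  funext ⟨i, j⟩
  fin_cases i <;> fin_cases j <;>
    · simp [-Prod.mk_zero_zero, -Prod.mk_one_one, Prod.ext_iff, Matrix.mulVec,
        dotProduct, Fintype.sum_prod_type, Fin.sum_univ_two, E1, E0, u1, pi0, pi1,
        piPlus, piMinus, cR, Matrix.sub_apply, Matrix.one_apply] <;>
    (push_cast;
     first
     | ring1
     | linear_combination hs/4
     | linear_combination -hs/4)

lemma hcos : Real.cos (Real.pi / 8) ^ 2 = cR := by
  have h1 : Real.cos (Real.pi / 8) ^ 2 = 1/2 + Real.cos (2 * (Real.pi / 8)) / 2 :=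
    Real.cos_sq _
  rw [h1, show 2 * (Real.pi / 8) = Real.pi / 4 by ring, Real.cos_pi_div_four, cR]
  ring

theorem povm_opNorm_and_min_entropy :
    ‖Matrix.toEuclideanCLM (𝕜 := ℂ) E0‖ = Real.cos (Real.pi / 8) ^ 2 ∧
    ‖Matrix.toEuclideanCLM (𝕜 := ℂ) E1‖ = Real.cos (Real.pi / 8) ^ 2 ∧
    ∀ ρ : Matrix (Fin 2 × Fin 2) (Fin 2 × Fin 2) ℂ,
      ρ.PosSemidef → ρ.trace = 1 →
        max ((E0 * ρ).trace.re) ((E1 * ρ).trace.re) ≤ Real.cos (Real.pi / 8) ^ 2 := by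
  have hcR : (0:ℝ) ≤ cR := by
    rw [cR]; positivity
  have h0 : ‖Matrix.toEuclideanCLM (𝕜 := ℂ) E0‖ = cR :=
    aux_norm_eq E0 B0 cR hcR hfac0 u0 hu0ne hEu0
  have h1 : ‖Matrix.toEuclideanCLM (𝕜 := ℂ) E1‖ = cR :=
    aux_norm_eq E1 B1 cR hcR hfac1 u1 hu1ne hEu1
  rw [hcos]
  exact ⟨h0, h1, fun ρ hρ htr =>
    max_le (aux_trace_le E0 cR h0 ρ hρ htr) (aux_trace_le E1 cR h1 ρ hρ htr)⟩
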